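/- Define the linear operator ℳ from gauge fields on T to functions on T by (ℳZ)(x) := −(τZ)(y,x) + L^{-3} Σ_{x'∈B(y)} (τZ)(y,x') for x ∈ B(y), y ∈ T'. If μ : T → ℝ satisfies Σ_{x∈B(y)} μ(x) = 0 for every y ∈ T', then ℳ(∂μ) = −μ. -/

import Mathlib

open Finset

noncomputable section

/-- Points of the discrete torus `(ℤ/Nℤ)³`. -/
abbrev TPt (N : ℕ) : Type := Fin 3 → ZMod N

/-- The standard unit vector `e_μ` in the torus. -/
def unitVec (N : ℕ) (μ : Fin 3) : TPt N := fun i => if i = μ then 1 else 0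

/-- The representative of `a ∈ ℤ/Nℤ` in the symmetric range `{-(N-1)/2, …, (N-1)/2}`
(for odd `N`). -/
def symRep (N : ℕ) (a : ZMod N) : ℤ :=
  if 2 * (a.val : ℤ) + 1 ≤ (N : ℤ) then (a.val : ℤ) else (a.val : ℤ) - (N : ℤ)

/-- Shift a torus point by `k` steps in direction `μ`. -/
def shiftT {N : ℕ} (z : TPt N) (μ : Fin 3) (k : ℤ) : TPt N :=
  fun i => if i = μ then z i + (k : ZMod N) else z i

/-- The sum of the gauge field `A` along the straight lattice path from `z` to `z + t·e_μ`. -/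
def segT {N : ℕ} (A : TPt N → TPt N → ℝ) (z : TPt N) (μ : Fin 3) (t : ℤ) : ℝ :=
  if 0 ≤ t then ∑ j ∈ Finset.range t.toNat, A (shiftT z μ (j : ℤ)) (shiftT z μ ((j : ℤ) + 1))
  else ∑ j ∈ Finset.range (-t).toNat, A (shiftT z μ (-(j : ℤ))) (shiftT z μ (-(j : ℤ) - 1))

/-- The field strength `dA` on the plaquette based at `x` spanned by `e_μ, e_ν`. -/
def plaqT {N : ℕ} (A : TPt N → TPt N → ℝ) (x : TPt N) (μ ν : Fin 3) : ℝ :=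
  A x (x + unitVec N μ) + A (x + unitVec N μ) (x + unitVec N μ + unitVec N ν)
    + A (x + unitVec N μ + unitVec N ν) (x + unitVec N ν) + A (x + unitVec N ν) x

/-- The corner of the rectilinear path `Γ^π_{yx}` reached after the first `m` coordinate
moves. -/
def interPtT {N : ℕ} (y x : TPt N) (π : Equiv.Perm (Fin 3)) (m : ℕ) : TPt N :=
  fun i => if ((π.symm i : Fin 3) : ℕ) < m then x i else y i

/-- `A(Γ^π_{yx})`: the sum of `A` along the rectilinear path (not wrapping around the
torus) from `y` to `x`, moving the coordinates to their final values in the order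
`π 0, π 1, π 2`; the coordinate increments are the symmetric representatives of `x - y`. -/
def gammaSumT {N : ℕ} (A : TPt N → TPt N → ℝ) (π : Equiv.Perm (Fin 3)) (y x : TPt N) : ℝ :=
  ∑ m : Fin 3, segT A (interPtT y x π (m : ℕ)) (π m) (symRep N (x (π m) - y (π m)))

/-- `(τA)(y,x) = (1/6) Σ_π A(Γ^π_{yx})`, averaged over the `3! = 6` permutations. -/
def tauBlk {N : ℕ} (A : TPt N → TPt N → ℝ) (y x : TPt N) : ℝ :=
  (1 / 6) * ∑ π : Equiv.Perm (Fin 3), gammaSumT A π y x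

/-- The block of radius `R` centered at `y`: all `x` whose coordinates relative to `y`
have symmetric representative of absolute value at most `R`. -/
def blockF (N : ℕ) [NeZero N] (R : ℤ) (y : TPt N) : Finset (TPt N) :=
  Finset.univ.filter fun x => ∀ i, |symRep N (x i - y i)| ≤ R

/-- Membership in the coarse lattice `(Lℤ/Nℤ)³ ⊆ (ℤ/Nℤ)³`. -/
def isCoarse (L N : ℕ) (y : TPt N) : Prop :=
  ∀ i, ∃ c : ZMod N, y i = (L : ZMod N) * c

/-- The coarse unit vector `L·e_μ`. -/
def cUnitVec (L N : ℕ) (μ : Fin 3) : TPt N := fun i => if i = μ then (L : ZMod N) else 0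

/-- The block-averaged field on coarse bonds:
`(QA)(y, y+Le_μ) = L⁻⁴ Σ_{x ∈ B(y)} A(Γ_{x,x+Le_μ})`. -/
def Qc (L : ℕ) {N : ℕ} [NeZero N] (A : TPt N → TPt N → ℝ) (y : TPt N) (μ : Fin 3) : ℝ :=
  ((L : ℝ) ^ 4)⁻¹ * ∑ x ∈ blockF N (((L : ℤ) - 1) / 2) y, segT A x μ (L : ℤ)

/-- The representative in `{-(L-1)/2, …, (L-1)/2}` of `a` modulo `L` (for odd `L`):
the offset of `a` from the nearest point of the coarse lattice `Lℤ/Nℤ`. -/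
def nearRes (L : ℕ) {N : ℕ} (a : ZMod N) : ℤ :=
  if 2 * ((a.val % L : ℕ) : ℤ) + 1 ≤ (L : ℤ) then ((a.val % L : ℕ) : ℤ)
  else ((a.val % L : ℕ) : ℤ) - (L : ℤ)

/-- The coarse site `y ∈ T'` whose block `B(y)` contains `x`. -/
def coarsePart (L : ℕ) {N : ℕ} (x : TPt N) : TPt N :=
  fun i => x i - ((nearRes L (x i) : ℤ) : ZMod N)

/-- The map `ℳ`: for `x ∈ B(y)`,
`(ℳZ)(x) = −(τZ)(y,x) + L⁻³ Σ_{x' ∈ B(y)} (τZ)(y,x')`. -/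
def Mmap (L : ℕ) {N : ℕ} [NeZero N] (Z : TPt N → TPt N → ℝ) (x : TPt N) : ℝ :=
  - tauBlk Z (coarsePart L x) x
    + ((L : ℝ) ^ 3)⁻¹ *
        ∑ x' ∈ blockF N (((L : ℤ) - 1) / 2) (coarsePart L x), tauBlk Z (coarsePart L x) x'

section Aux

lemma intCast_symRep {N : ℕ} [NeZero N] (a : ZMod N) :
    ((symRep N a : ℤ) : ZMod N) = a := by
  unfold symRep
  split_ifs <;> push_cast <;>
    simp [ZMod.natCast_val, ZMod.cast_id]

lemma symRep_intCast {N : ℕ} [NeZero N] {r : ℤ} (h1 : 2 * r + 1 ≤ (N : ℤ))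
    (h2 : -(N : ℤ) ≤ 2 * r) : symRep N ((r : ZMod N)) = r := by
  have hN : 0 < (N : ℤ) := by exact_mod_cast (NeZero.pos N)
  have hv : (ZMod.val ((r : ZMod N)) : ℤ) = r % N := ZMod.val_intCast r
  unfold symRep
  rw [hv]
  rcases le_or_gt 0 r with h | h
  · have : r % N = r := Int.emod_eq_of_lt h (by omega)
    split_ifs <;> omega
  · have h3 : (r + N) % (N : ℤ) = r + N := Int.emod_eq_of_lt (by omega) (by omega)
    have h4 : r % N = r + N := by
      have := Int.add_mul_emod_self_left (a := r) (b := (N : ℤ)) (c := 1)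
      rw [mul_one] at this
      omega
    split_ifs <;> omega

lemma nearRes_bounds {L N : ℕ} (hLodd : Odd L) (hL3 : 3 ≤ L) (a : ZMod N) :
    2 * nearRes L a + 1 ≤ (L : ℤ) ∧ -(L : ℤ) ≤ 2 * nearRes L a ∧
      |nearRes L a| ≤ ((L : ℤ) - 1) / 2 := by
  obtain ⟨k, hk⟩ := hLodd
  have hkL : (L : ℤ) = 2 * k + 1 := by exact_mod_cast hk
  have hmod : a.val % L < L := Nat.mod_lt _ (by omega)
  have h' : ((a.val % L : ℕ) : ℤ) < L := by exact_mod_cast hmod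
  have h0 : 0 ≤ ((a.val % L : ℕ) : ℤ) := Int.natCast_nonneg _
  rw [abs_le]
  unfold nearRes
  split_ifs with h <;> omega

lemma coarsePart_isCoarse {L N : ℕ} [NeZero N] (x : TPt N) :
    isCoarse L N (coarsePart L x) := by
  intro i
  set v : ℕ := (x i).val with hv
  obtain ⟨q, hq⟩ : ∃ q : ℤ, (v : ℤ) - nearRes L (x i) = L * q := by
    have hdm : (L : ℤ) * ((v / L : ℕ) : ℤ) + ((v % L : ℕ) : ℤ) = v := by
      exact_mod_cast Nat.div_add_mod v L
    unfold nearRes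
    rw [← hv]
    split_ifs with h
    · exact ⟨((v / L : ℕ) : ℤ), by omega⟩
    · refine ⟨((v / L : ℕ) : ℤ) + 1, ?_⟩
      have hmul : (L : ℤ) * (((v / L : ℕ) : ℤ) + 1) = (L : ℤ) * ((v / L : ℕ) : ℤ) + L := by
        ring
      omega
  refine ⟨((q : ℤ) : ZMod N), ?_⟩
  have hx : ((v : ℤ) : ZMod N) = x i := by
    simp [hv, ZMod.natCast_val, ZMod.cast_id]
  calc coarsePart L x i = ((v : ℤ) : ZMod N) - ((nearRes L (x i) : ℤ) : ZMod N) := by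
        rw [hx]; rfl
    _ = (((v : ℤ) - nearRes L (x i) : ℤ) : ZMod N) := by push_cast; ring
    _ = (((L : ℤ) * q : ℤ) : ZMod N) := by rw [hq]
    _ = (L : ZMod N) * ((q : ℤ) : ZMod N) := by push_cast; ring

lemma mem_blockF_coarsePart {L N : ℕ} [NeZero N] (hLodd : Odd L) (hL3 : 3 ≤ L)
    (hLN : L ≤ N) (x : TPt N) :
    x ∈ blockF N (((L : ℤ) - 1) / 2) (coarsePart L x) := by
  have hNL : (L : ℤ) ≤ N := by exact_mod_cast hLN
  rw [blockF, Finset.mem_filter]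
  refine ⟨Finset.mem_univ _, fun i => ?_⟩
  obtain ⟨hb1, hb2, hb3⟩ := nearRes_bounds (N := N) hLodd hL3 (x i)
  have hdiff : x i - coarsePart L x i = ((nearRes L (x i) : ℤ) : ZMod N) := by
    simp [coarsePart]
  rw [hdiff, symRep_intCast (by omega) (by omega)]
  exact hb3

lemma blockF_card {L N : ℕ} [NeZero N] (hL3 : 3 ≤ L) (hLodd : Odd L) (hLN : L ≤ N)
    (y : TPt N) : (blockF N (((L : ℤ) - 1) / 2) y).card = L ^ 3 := by
  obtain ⟨k, hk⟩ := hLodd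
  have hkL : (L : ℤ) = 2 * k + 1 := by exact_mod_cast hk
  set R : ℤ := ((L : ℤ) - 1) / 2 with hR
  have hRk : R = k := by omega
  have hNL : (L : ℤ) ≤ N := by exact_mod_cast hLN
  have hcard : (blockF N R y).card
      = (Fintype.piFinset (fun _ : Fin 3 => Finset.Icc (-R) R)).card := by
    apply Finset.card_bij' (i := fun x _ => fun j => symRep N (x j - y j))
      (j := fun r _ => fun j => y j + ((r j : ℤ) : ZMod N))
    · intro x hx
      rw [Fintype.mem_piFinset]
      intro j
      rw [Finset.mem_Icc, ← abs_le]
      exact (Finset.mem_filter.mp hx).2 j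
    · intro r hr
      rw [blockF, Finset.mem_filter]
      refine ⟨Finset.mem_univ _, fun i => ?_⟩
      rw [Fintype.mem_piFinset] at hr
      have hri := Finset.mem_Icc.mp (hr i)
      rw [add_sub_cancel_left, symRep_intCast (by omega) (by omega), abs_le]
      omega
    · intro x hx
      funext j
      rw [intCast_symRep]
      ring
    · intro r hr
      funext j
      rw [Fintype.mem_piFinset] at hr
      have hrj := Finset.mem_Icc.mp (hr j)
      rw [add_sub_cancel_left, symRep_intCast (by omega) (by omega)]
  rw [hcard, Fintype.card_piFinset]
  have h1 : (Finset.Icc (-R) R).card = L := by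
    rw [Int.card_Icc]; omega
  simp [h1]

lemma segT_grad {N : ℕ} (μ : TPt N → ℝ) (z : TPt N) (d : Fin 3) (t : ℤ) :
    segT (fun a b => μ b - μ a) z d t = μ (shiftT z d t) - μ z := by
  have tele : ∀ (f : ℤ → ℝ) (n : ℕ),
      ∑ j ∈ Finset.range n, (f ((j : ℤ) + 1) - f (j : ℤ)) = f n - f 0 := by
    intro f n
    induction n with
    | zero => simp
    | succ n ih => rw [Finset.sum_range_succ, ih]; push_cast; ring
  have h0 : shiftT z d 0 = z := by
    funext i; simp [shiftT]
  unfold segT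
  split_ifs with h
  · have := tele (fun s => μ (shiftT z d s)) t.toNat
    rw [this, Int.toNat_of_nonneg h, h0]
  · have heq : ∀ j ∈ Finset.range (-t).toNat,
        μ (shiftT z d (-(j : ℤ) - 1)) - μ (shiftT z d (-(j : ℤ)))
          = (fun s => μ (shiftT z d (-s))) ((j : ℤ) + 1)
            - (fun s => μ (shiftT z d (-s))) (j : ℤ) := by
      intro j _
      simp only
      have : -((j : ℤ) + 1) = -(j : ℤ) - 1 := by ring
      rw [this]
    rw [Finset.sum_congr rfl heq, tele (fun s => μ (shiftT z d (-s))) (-t).toNat]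
    simp only [neg_zero, h0]
    have : -(((-t).toNat : ℕ) : ℤ) = t := by omega
    rw [this]

lemma shift_interPt {N : ℕ} [NeZero N] (y x : TPt N) (π : Equiv.Perm (Fin 3)) (m : Fin 3) :
    shiftT (interPtT y x π (m : ℕ)) (π m) (symRep N (x (π m) - y (π m)))
      = interPtT y x π ((m : ℕ) + 1) := by
  funext i
  unfold shiftT interPtT
  by_cases hi : i = π m
  · subst hi
    simp only [if_pos rfl, Equiv.symm_apply_apply]
    rw [if_neg (lt_irrefl _), intCast_symRep]
    simp
  · rw [if_neg hi]
    have hne : ((π.symm i : Fin 3) : ℕ) ≠ (m : ℕ) := by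
      intro h
      exact hi (by rw [← Fin.ext h, Equiv.apply_symm_apply])
    by_cases h2 : ((π.symm i : Fin 3) : ℕ) < (m : ℕ)
    · rw [if_pos h2, if_pos (by omega)]
    · rw [if_neg h2, if_neg (by omega)]

lemma tauBlk_grad {N : ℕ} [NeZero N] (μ : TPt N → ℝ) (y x : TPt N) :
    tauBlk (fun a b => μ b - μ a) y x = μ x - μ y := by
  have hg : ∀ π : Equiv.Perm (Fin 3), gammaSumT (fun a b => μ b - μ a) π y x = μ x - μ y := by
    intro π
    have h3 : interPtT y x π 3 = x := by
      funext i; simp [interPtT, (π.symm i).isLt]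
    have h0 : interPtT y x π 0 = y := by
      funext i; simp [interPtT]
    unfold gammaSumT
    rw [Fin.sum_univ_three]
    rw [segT_grad, segT_grad, segT_grad,
      shift_interPt y x π 0, shift_interPt y x π 1, shift_interPt y x π 2]
    simp only [Fin.val_zero, Fin.val_one, Fin.val_two, zero_add]
    rw [h0, h3]
    ring
  rw [tauBlk, Finset.sum_congr rfl (fun π _ => hg π), Finset.sum_const]
  have : (Finset.univ : Finset (Equiv.Perm (Fin 3))).card = 6 := by
    rw [Finset.card_univ]
    simp [Fintype.card_perm]
    rfl
  rw [this]
  ring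

end Aux

/-- If `μ : T → ℝ` has zero average over every block `B(y)`, `y ∈ T'`,
then `ℳ(∂μ) = −μ`, where `(∂μ)(x,x') = μ(x') − μ(x)`. -/
theorem Mmap_of_gradient (L M : ℕ) (hL3 : 3 ≤ L) (hLodd : Odd L) (hM : 2 ≤ M)
    [NeZero (L ^ M)]
    (μ : TPt (L ^ M) → ℝ)
    (hμ : ∀ y : TPt (L ^ M), isCoarse L (L ^ M) y →
      ∑ x ∈ blockF (L ^ M) (((L : ℤ) - 1) / 2) y, μ x = 0) :
    Mmap L (fun a b => μ b - μ a) = fun x => - μ x := by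
  have hLN : L ≤ L ^ M := Nat.le_self_pow (by omega) L
  funext x
  set y := coarsePart L x with hy
  have hyc : isCoarse L (L ^ M) y := coarsePart_isCoarse x
  have hcard := blockF_card (N := L ^ M) hL3 hLodd hLN y
  have hsum := hμ y hyc
  unfold Mmap
  rw [← hy, tauBlk_grad]
  have hsum2 : ∑ x' ∈ blockF (L ^ M) (((L : ℤ) - 1) / 2) y,
      tauBlk (fun a b => μ b - μ a) y x'
      = ∑ x' ∈ blockF (L ^ M) (((L : ℤ) - 1) / 2) y, (μ x' - μ y) :=
    Finset.sum_congr rfl (fun x' _ => tauBlk_grad μ y x')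
  rw [hsum2, Finset.sum_sub_distrib, hsum, Finset.sum_const, hcard]
  have hL0 : (L : ℝ) ≠ 0 := by positivity
  have hcast : ((L ^ 3 : ℕ) : ℝ) = (L : ℝ) ^ 3 := by push_cast; ring
  rw [nsmul_eq_mul, hcast]
  field_simp
  ring
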